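/- If g is a standard Gaussian vector in ℝ^k and r = √(2k·ln(1/(2c))) with 0 < c ≤ 0.2, then P(‖g‖₂ > r) ≤ (2c·√(2e·ln(1/(2c))))^k ≤ 2c·√(2e·ln(1/(2c))), and hence P(‖g‖₂ ≤ r) ≥ 0.1. -/

import Mathlib

open MeasureTheory ProbabilityTheory Real Fintype

lemma gtb_pi_integrable {n : ℕ} {μ : Measure ℝ} [SigmaFinite μ] {f : ℝ → ℝ}
    (hf : Integrable f μ) :
    Integrable (fun x : Fin n → ℝ => ∏ i, f (x i)) (Measure.pi fun _ => μ) := by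
  induction n with
  | zero =>
      simp only [Finset.univ_eq_empty, Finset.prod_empty, integrable_const_iff, one_ne_zero,
        Measure.pi_empty_univ, ENNReal.one_lt_top, or_true, false_or]
      exact ⟨by simp [Measure.pi_empty_univ]⟩
  | succ n n_ih =>
      have h := ((measurePreserving_piFinSuccAbove (fun _ : Fin (n+1) => μ) 0).symm)
      rw [← h.integrable_comp_emb (MeasurableEquiv.measurableEmbedding _)]
      simp_rw [MeasurableEquiv.piFinSuccAbove_symm_apply, Fin.insertNthEquiv,
        Fin.prod_univ_succ, Fin.insertNth_zero]
      simp only [Fin.zero_succAbove, Function.comp_def, Fin.cons_zero, Fin.cons_succ]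
      exact Integrable.mul_prod hf n_ih

lemma gtb_pi_integral {n : ℕ} {μ : Measure ℝ} [SigmaFinite μ] (f : ℝ → ℝ) :
    ∫ x : Fin n → ℝ, ∏ i, f (x i) ∂(Measure.pi fun _ => μ) = (∫ x, f x ∂μ) ^ n := by
  induction n with
  | zero => simp [Measure.pi_empty_univ, measureReal_def]
  | succ n n_ih =>
      calc ∫ x : Fin (n+1) → ℝ, ∏ i, f (x i) ∂(Measure.pi fun _ => μ)
          = ∫ p : ℝ × (Fin n → ℝ), f p.1 * ∏ i, f (p.2 i)
              ∂(μ.prod (Measure.pi fun _ => μ)) := by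
            rw [← ((measurePreserving_piFinSuccAbove (fun _ : Fin (n+1) => μ) 0).symm).integral_comp']
            simp [MeasurableEquiv.piFinSuccAbove_symm_apply, Fin.insertNthEquiv,
              Fin.prod_univ_succ, Fin.insertNth_zero, Fin.zero_succAbove, Fin.cons_zero,
              Fin.cons_succ]
        _ = (∫ x, f x ∂μ) * ∫ x : Fin n → ℝ, ∏ i, f (x i) ∂(Measure.pi fun _ => μ) :=
            integral_prod_mul f (fun y : Fin n → ℝ => ∏ i, f (y i))
        _ = (∫ x, f x ∂μ) ^ (n+1) := by rw [n_ih]; ring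


lemma gtb_gauss_int {t : ℝ} (ht : t < 1/2) :
    Integrable (fun x => Real.exp (t * x ^ 2)) (gaussianReal 0 1) ∧
    ∫ x, Real.exp (t * x ^ 2) ∂(gaussianReal 0 1) = 1 / Real.sqrt (1 - 2 * t) := by
  have hb : 0 < 1/2 - t := by linarith
  have key : ∀ x : ℝ, gaussianPDFReal 0 1 x * Real.exp (t * x ^ 2)
      = (Real.sqrt (2 * π))⁻¹ * Real.exp (-(1/2 - t) * x ^ 2) := by
    intro x
    rw [gaussianPDFReal]
    push_cast
    rw [mul_one, mul_assoc, ← Real.exp_add]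
    congr 2
    ring
  have hmeas : Measurable fun x => (gaussianPDFReal 0 1 x).toNNReal :=
    (measurable_gaussianPDFReal 0 1).real_toNNReal
  have hpdfsmul : ∀ x : ℝ, (gaussianPDFReal 0 1 x).toNNReal • Real.exp (t * x ^ 2)
      = (Real.sqrt (2 * π))⁻¹ * Real.exp (-(1/2 - t) * x ^ 2) := by
    intro x
    rw [NNReal.smul_def, smul_eq_mul, Real.coe_toNNReal _ (gaussianPDFReal_nonneg 0 1 x), key x]
  have hrw : gaussianReal 0 1
      = volume.withDensity fun x => ((gaussianPDFReal 0 1 x).toNNReal : ENNReal) := by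
    rw [gaussianReal_of_var_ne_zero 0 one_ne_zero]; rfl
  constructor
  · rw [hrw, integrable_withDensity_iff_integrable_smul hmeas]
    have h : (fun x => (gaussianPDFReal 0 1 x).toNNReal • Real.exp (t * x ^ 2))
        = fun x => (Real.sqrt (2 * π))⁻¹ * Real.exp (-(1/2 - t) * x ^ 2) := funext hpdfsmul
    rw [h]
    exact (integrable_exp_neg_mul_sq hb).const_mul _
  · rw [hrw, integral_withDensity_eq_integral_smul hmeas]
    simp_rw [hpdfsmul]
    rw [integral_const_mul, integral_gaussian]
    rw [inv_mul_eq_div, div_eq_div_iff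
      (Real.sqrt_pos.mpr (by positivity : (0:ℝ) < 2*π)).ne'
      (Real.sqrt_pos.mpr (by linarith : (0:ℝ) < 1-2*t)).ne', one_mul,
      ← Real.sqrt_mul (by positivity : (0:ℝ) ≤ π/(1/2-t))]
    congr 1
    have hne : (1/2 - t) ≠ 0 := hb.ne'
    rw [show (1:ℝ) - 2*t = (1/2 - t)*2 by ring, ← mul_assoc, div_mul_cancel₀ _ hne]
    ring


set_option maxHeartbeats 1000000 in
lemma gtb_mono {c : ℝ} (hc : 0 < c) (hc' : c ≤ 0.2) (hexphalf : Real.exp (1/2) < 2.5) :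
    c^2 * Real.log (1/(2*c)) ≤ 0.04 * Real.log 2.5 := by
  have G : ℝ → ℝ := fun x => -(x^2 * Real.log (2*x))
  have hderiv : ∀ x ∈ Set.Ioo c 0.2,
      HasDerivAt (fun x : ℝ => -(x^2 * Real.log (2*x))) (-(2*x*Real.log (2*x) + x)) x := by
    intro x hx
    have hx0 : 0 < x := lt_trans hc hx.1
    have h1 : HasDerivAt (fun y : ℝ => y^2) (2*x) x := by
      simpa using hasDerivAt_pow 2 x
    have h2 : HasDerivAt (fun y : ℝ => Real.log (2*y)) x⁻¹ x := by
      have hcmp := (Real.hasDerivAt_log (by positivity : (2:ℝ)*x ≠ 0)).comp x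
        ((hasDerivAt_id x).const_mul 2)
      refine hcmp.congr_deriv ?_
      field_simp
    have := (h1.mul h2).neg
    refine this.congr_deriv ?_
    field_simp
  have hmonoG : MonotoneOn (fun x : ℝ => -(x^2 * Real.log (2*x))) (Set.Icc c 0.2) := by
    apply monotoneOn_of_deriv_nonneg (convex_Icc _ _)
    · apply continuousOn_of_forall_continuousAt
      intro x hx
      have hx0 : 0 < x := lt_of_lt_of_le hc hx.1
      exact ((continuousAt_id.pow 2).mul
        ((Real.continuousAt_log (ne_of_gt (by linarith : (0:ℝ) < 2*x))).comp
          (continuousAt_const.mul continuousAt_id))).neg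
    · intro x hx
      rw [interior_Icc] at hx
      exact ((hderiv x hx).differentiableAt).differentiableWithinAt
    · intro x hx
      rw [interior_Icc] at hx
      rw [(hderiv x hx).deriv]
      have hx0 : 0 < x := lt_trans hc hx.1
      have hlogx : Real.log (2*x) ≤ -(1/2) := by
        rw [Real.log_le_iff_le_exp (by positivity)]
        have hee : Real.exp (-(1/2)) * Real.exp (1/2) = 1 := by
          rw [← Real.exp_add]; norm_num
        nlinarith [Real.exp_pos (-(1/2):ℝ), hx.2, hexphalf]
      have hm : 2*x*Real.log (2*x) ≤ 2*x*(-(1/2)) :=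
        mul_le_mul_of_nonneg_left hlogx (by linarith)
      linarith
  have hle := hmonoG (Set.mem_Icc.mpr ⟨le_refl c, hc'⟩)
    (Set.mem_Icc.mpr ⟨hc', le_refl 0.2⟩) hc'
  have eL : Real.log (1/(2*c)) = -Real.log (2*c) := by
    rw [one_div, Real.log_inv]
  have e02 : Real.log (2*(0.2:ℝ)) = -Real.log 2.5 := by
    rw [show (2:ℝ)*0.2 = 2.5⁻¹ by norm_num, Real.log_inv]
  simp only [e02] at hle
  rw [eL]
  nlinarith [hle]

set_option maxHeartbeats 1000000 in
theorem gaussian_tail_bound {k : ℕ} (hk : 1 ≤ k) (c : ℝ) (hc : 0 < c) (hc' : c ≤ 0.2)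
    (r : ℝ) (hr : r = Real.sqrt (2 * k * Real.log (1 / (2 * c)))) :
    ((Measure.pi fun _ : Fin k => gaussianReal 0 1)
        {g : Fin k → ℝ | r < Real.sqrt (∑ i, g i ^ 2)}).toReal ≤
      (2 * c * Real.sqrt (2 * Real.exp 1 * Real.log (1 / (2 * c)))) ^ k ∧
    (2 * c * Real.sqrt (2 * Real.exp 1 * Real.log (1 / (2 * c)))) ^ k ≤
      2 * c * Real.sqrt (2 * Real.exp 1 * Real.log (1 / (2 * c))) ∧
    0.1 ≤ ((Measure.pi fun _ : Fin k => gaussianReal 0 1)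
        {g : Fin k → ℝ | Real.sqrt (∑ i, g i ^ 2) ≤ r}).toReal := by
  have hc2 : (0:ℝ) < 2 * c := by linarith
  set L := Real.log (1 / (2 * c)) with hLdef
  set B := 2 * c * Real.sqrt (2 * Real.exp 1 * L) with hBdef
  set μpi := Measure.pi fun _ : Fin k => gaussianReal 0 1 with hμpi
  -- basic facts about L
  have hinv : (2.5:ℝ) ≤ 1 / (2 * c) := by rw [le_div_iff₀ hc2]; linarith
  have hexphalf : Real.exp (1/2) < 2.5 := by
    have he : Real.exp (1/2) * Real.exp (1/2) = Real.exp 1 := by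
      rw [← Real.exp_add]; norm_num
    nlinarith [Real.exp_one_lt_d9, Real.exp_pos (1/2)]
  have hL : 1/2 < L := by
    rw [hLdef, Real.lt_log_iff_exp_lt (by positivity : (0:ℝ) < 1 / (2*c))]
    exact lt_of_lt_of_le hexphalf hinv
  have hL0 : (0:ℝ) < L := by linarith
  -- the Chernoff parameter
  set t := 1/2 - 1/(4*L) with htdef
  have hquart : (0:ℝ) < 1/(4*L) := by positivity
  have hhalf : 1/(4*L) < 1/2 := by
    rw [div_lt_div_iff₀ (by linarith) (by norm_num)]; linarith
  have ht0 : 0 < t := by rw [htdef]; linarith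
  have ht : t < 1/2 := by rw [htdef]; linarith
  have h12t : 1 - 2*t = 1/(2*L) := by
    rw [htdef]; field_simp; ring
  -- the single-coordinate integral
  obtain ⟨hint1, hval1⟩ := gtb_gauss_int ht
  have hI1 : ∫ x, Real.exp (t * x ^ 2) ∂(gaussianReal 0 1) = Real.sqrt (2*L) := by
    rw [hval1, h12t, show (1:ℝ)/(2*L) = (2*L)⁻¹ from one_div _, Real.sqrt_inv, one_div, inv_inv]
  -- product integral
  have hfint : Integrable (fun x : Fin k → ℝ => ∏ i, Real.exp (t * x i ^ 2)) μpi :=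
    gtb_pi_integrable hint1
  have hIk : ∫ x : Fin k → ℝ, ∏ i, Real.exp (t * x i ^ 2) ∂μpi
      = (Real.sqrt (2*L)) ^ k := by
    have h := gtb_pi_integral (n := k) (μ := gaussianReal 0 1) (fun y => Real.exp (t * y ^ 2))
    rw [hI1] at h
    exact h
  -- Markov
  have markov := mul_meas_ge_le_integral_of_nonneg
    (μ := μpi) (f := fun x : Fin k → ℝ => ∏ i, Real.exp (t * x i ^ 2))
    (Filter.Eventually.of_forall fun x => by positivity) hfint (Real.exp (t * r^2))
  rw [hIk] at markov
  -- set inclusion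
  have hr0 : 0 ≤ r := by rw [hr]; exact Real.sqrt_nonneg _
  have hr2 : r^2 = 2*k*L := by
    rw [hr, Real.sq_sqrt (by positivity)]
  have hsub : {g : Fin k → ℝ | r < Real.sqrt (∑ i, g i ^ 2)}
      ⊆ {x : Fin k → ℝ | Real.exp (t * r^2) ≤ ∏ i, Real.exp (t * x i ^ 2)} := by
    intro g hg
    simp only [Set.mem_setOf_eq] at hg ⊢
    have hS : (0:ℝ) ≤ ∑ i, g i ^ 2 := by positivity
    have h2 : r^2 ≤ ∑ i, g i ^ 2 := by
      nlinarith [Real.sq_sqrt hS, Real.sqrt_nonneg (∑ i, g i ^ 2)]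
    have : ∏ i, Real.exp (t * g i ^ 2) = Real.exp (t * ∑ i, g i ^ 2) := by
      rw [Finset.mul_sum, Real.exp_sum]
    rw [this]
    exact Real.exp_le_exp.mpr (mul_le_mul_of_nonneg_left h2 ht0.le)
  have hmono : (μpi {g : Fin k → ℝ | r < Real.sqrt (∑ i, g i ^ 2)}).toReal
      ≤ (μpi {x : Fin k → ℝ | Real.exp (t * r^2) ≤ ∏ i, Real.exp (t * x i ^ 2)}).toReal :=
    ENNReal.toReal_mono (measure_ne_top _ _) (measure_mono hsub)
  have hchain : (μpi {g : Fin k → ℝ | r < Real.sqrt (∑ i, g i ^ 2)}).toReal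
      ≤ Real.exp (-(t * r^2)) * (Real.sqrt (2*L)) ^ k := by
    refine hmono.trans ?_
    rw [Real.exp_neg, inv_mul_eq_div, le_div_iff₀ (Real.exp_pos _)]
    rw [measureReal_def] at markov
    linarith [markov]
  -- identify the bound with B^k
  have hfactor : Real.exp (-(t * (2*L))) * Real.sqrt (2*L) = B := by
    have e1 : t * (2*L) = L - 1/2 := by rw [htdef]; field_simp; ring
    have e2 : Real.exp (-(L - 1/2)) = Real.exp (-L) * Real.exp (1/2) := by
      rw [← Real.exp_add]; ring_nf
    have e3 : Real.exp (-L) = 2*c := by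
      rw [hLdef, one_div, Real.log_inv, neg_neg, Real.exp_log hc2]
    have e4 : Real.exp (1/2) = Real.sqrt (Real.exp 1) := by
      rw [← Real.exp_half]
    have e5 : Real.sqrt (Real.exp 1) * Real.sqrt (2*L)
        = Real.sqrt (2 * Real.exp 1 * L) := by
      rw [← Real.sqrt_mul (Real.exp_pos 1).le]
      congr 1; ring
    rw [e1, e2, e3, e4, hBdef, mul_assoc, e5]
  have hBk : Real.exp (-(t * r^2)) * (Real.sqrt (2*L)) ^ k = B ^ k := by
    have : -(t * r^2) = k * (-(t * (2*L))) := by rw [hr2]; ring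
    rw [this, Real.exp_nat_mul, ← mul_pow, hfactor]
  have part1 : (μpi {g : Fin k → ℝ | r < Real.sqrt (∑ i, g i ^ 2)}).toReal ≤ B ^ k := by
    rw [← hBk]; exact hchain
  -- B ≤ 0.9
  have hlog25 : Real.log 2.5 < 0.92 := by
    rw [Real.log_lt_iff_lt_exp (by norm_num)]
    have h1 : Real.exp 0.92 = Real.exp 1 * Real.exp (-0.08) := by
      rw [← Real.exp_add]; norm_num
    have h2 : (0.92:ℝ) ≤ Real.exp (-0.08) := by
      linarith [Real.add_one_le_exp (-0.08 : ℝ)]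
    have h3 : Real.exp 1 * 0.92 ≤ Real.exp 1 * Real.exp (-0.08) :=
      mul_le_mul_of_nonneg_left h2 (Real.exp_pos 1).le
    rw [h1]
    linarith [Real.exp_one_gt_d9, h3]
  have hlog25pos : (0:ℝ) < Real.log 2.5 := Real.log_pos (by norm_num)
  have hmain : c^2 * L ≤ 0.04 * Real.log 2.5 := by
    rw [hLdef]
    exact gtb_mono hc hc' hexphalf
  have hB0 : 0 ≤ B := by rw [hBdef]; positivity
  have hB9 : B ≤ 0.9 := by
    have hs : Real.sqrt (2 * Real.exp 1 * L) ^ 2 = 2 * Real.exp 1 * L :=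
      Real.sq_sqrt (by positivity)
    have hBsq : B^2 = 8 * Real.exp 1 * (c^2 * L) := by
      rw [hBdef, mul_pow, mul_pow, hs]; ring
    nlinarith [hmain, hlog25, Real.exp_one_lt_d9, Real.exp_pos 1, hlog25pos, hB0]
  have hB1 : B ≤ 1 := by linarith
  have part2 : B ^ k ≤ B := by
    calc B ^ k ≤ B ^ 1 := pow_le_pow_of_le_one hB0 hB1 hk
    _ = B := pow_one B
  refine ⟨part1, part2, ?_⟩
  -- complement
  have hmeasset : MeasurableSet {g : Fin k → ℝ | r < Real.sqrt (∑ i, g i ^ 2)} := by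
    apply measurableSet_lt measurable_const
    exact (Finset.measurable_sum _ fun i _ => (measurable_pi_apply i).pow_const 2).sqrt
  have hcompl : {g : Fin k → ℝ | Real.sqrt (∑ i, g i ^ 2) ≤ r}
      = {g : Fin k → ℝ | r < Real.sqrt (∑ i, g i ^ 2)}ᶜ := by
    ext g; simp [not_lt]
  rw [hcompl]
  have h1 : (μpi {g : Fin k → ℝ | r < Real.sqrt (∑ i, g i ^ 2)}ᶜ).toReal
      = 1 - (μpi {g : Fin k → ℝ | r < Real.sqrt (∑ i, g i ^ 2)}).toReal := by
    rw [measure_compl hmeasset (measure_ne_top _ _), measure_univ,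
      ENNReal.toReal_sub_of_le prob_le_one (by simp), ENNReal.toReal_one]
  rw [h1]
  have := part1.trans part2
  linarith
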